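/- Let p be an odd prime, n ≥ 1, and let M ∈ Sym_n(ℤ_p) be nonsingular. Set e = Dep_p(Cok(M)) + 1. Then for every ΔM ∈ Sym_n(ℤ_p) all of whose entries lie in p^e ℤ_p, the matrices M and M + ΔM are congruent under GL_n(ℤ_p). -/

import Mathlib

open Matrix MeasureTheory

/-- Congruence of square matrices over `R`: `B = U * A * Uᵀ` for some `U ∈ GL`. -/
def Matrix.Congruent {R : Type*} [CommRing R] {ι : Type*} [Fintype ι] [DecidableEq ι]
    (A B : Matrix ι ι R) : Prop :=
  ∃ U : (Matrix ι ι R)ˣ, (U : Matrix ι ι R) * A * (U : Matrix ι ι R)ᵀ = B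

/-- Congruence of square matrices indexed by two (necessarily equipotent) index types. -/
def Matrix.CongruentTo {R : Type*} [CommRing R] {ι κ : Type*} [Fintype ι] [DecidableEq ι]
    [Fintype κ] [DecidableEq κ] (A : Matrix ι ι R) (B : Matrix κ κ R) : Prop :=
  ∃ e : ι ≃ κ, (A.submatrix e.symm e.symm).Congruent B

/-- The cokernel `R^ι / M R^ι` of a square matrix `M`. -/
abbrev Matrix.Cok {R : Type*} [CommRing R] {ι : Type*} [Fintype ι] (M : Matrix ι ι R) :=
  (ι → R) ⧸ LinearMap.range M.mulVecLin

/-- The pairing value `Xᵀ M⁻¹ Y ∈ ℚ_p`, the inverse being taken over `ℚ_p`. -/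
noncomputable def pairVal {p : ℕ} [Fact p.Prime] {ι : Type*} [Fintype ι] [DecidableEq ι]
    (M : Matrix ι ι ℤ_[p]) (X Y : ι → ℤ_[p]) : ℚ_[p] :=
  (fun i => (X i : ℚ_[p])) ⬝ᵥ ((M.map (fun a => (a : ℚ_[p])))⁻¹).mulVec (fun i => (Y i : ℚ_[p]))

/-- Isomorphism of cokernels together with their symmetric pairings: a group isomorphism
`Cok M ≃ Cok M'` such that for any lifts, the pairing values agree modulo `ℤ_p`. -/
def PairedIso {p : ℕ} [Fact p.Prime] {ι κ : Type*} [Fintype ι] [DecidableEq ι] [Fintype κ]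
    [DecidableEq κ] (M : Matrix ι ι ℤ_[p]) (M' : Matrix κ κ ℤ_[p]) : Prop :=
  ∃ e : M.Cok ≃+ M'.Cok,
    ∀ (X Y : ι → ℤ_[p]) (X' Y' : κ → ℤ_[p]),
      e (Submodule.Quotient.mk X) = Submodule.Quotient.mk X' →
      e (Submodule.Quotient.mk Y) = Submodule.Quotient.mk Y' →
      ‖pairVal M X Y - pairVal M' X' Y'‖ ≤ 1

section Helpers

variable {R : Type*} [CommRing R] {m : ℕ}

theorem matrix_mul_left_cancel [IsDomain R] {A B C : Matrix (Fin m) (Fin m) R}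
    (hA : A.det ≠ 0) (h : A * B = A * C) : B = C := by
  have h2 : A.det • B = A.det • C := by
    calc A.det • B = (A.adjugate * A) * B := by rw [Matrix.adjugate_mul, Matrix.smul_mul, one_mul]
    _ = (A.adjugate * A) * C := by rw [mul_assoc, h, mul_assoc]
    _ = A.det • C := by rw [Matrix.adjugate_mul, Matrix.smul_mul, one_mul]
  ext i j
  have := congrFun (congrFun (congrArg (fun X => X) h2) i) j
  simp only [Matrix.smul_apply, smul_eq_mul] at this
  exact mul_left_cancel₀ hA this

theorem matrix_mul_right_cancel [IsDomain R] {A B C : Matrix (Fin m) (Fin m) R}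
    (hA : A.det ≠ 0) (h : B * A = C * A) : B = C := by
  have h2 : A.det • B = A.det • C := by
    calc A.det • B = B * (A * A.adjugate) := by rw [Matrix.mul_adjugate, Matrix.mul_smul, mul_one]
    _ = C * (A * A.adjugate) := by rw [← mul_assoc, h, mul_assoc]
    _ = A.det • C := by rw [Matrix.mul_adjugate, Matrix.mul_smul, mul_one]
  ext i j
  have := congrFun (congrFun (congrArg (fun X => X) h2) i) j
  simp only [Matrix.smul_apply, smul_eq_mul] at this
  exact mul_left_cancel₀ hA this

theorem dvd_entries_mul {a b : R} {B C : Matrix (Fin m) (Fin m) R}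
    (hB : ∀ i j, a ∣ B i j) (hC : ∀ i j, b ∣ C i j) : ∀ i j, a * b ∣ (B * C) i j := by
  intro i j
  rw [Matrix.mul_apply]
  exact Finset.dvd_sum fun k _ => mul_dvd_mul (hB i k) (hC k j)

theorem dvd_entries_mul_left {a : R} {B C : Matrix (Fin m) (Fin m) R}
    (hB : ∀ i j, a ∣ B i j) : ∀ i j, a ∣ (B * C) i j := by
  intro i j
  rw [Matrix.mul_apply]
  exact Finset.dvd_sum fun k _ => (hB i k).mul_right _

theorem dvd_entries_mul_right {a : R} {B C : Matrix (Fin m) (Fin m) R}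
    (hC : ∀ i j, a ∣ C i j) : ∀ i j, a ∣ (B * C) i j := by
  intro i j
  rw [Matrix.mul_apply]
  exact Finset.dvd_sum fun k _ => (hC k j).mul_left _

theorem dvd_entries_smul {a r : R} {B : Matrix (Fin m) (Fin m) R}
    (hB : ∀ i j, a ∣ B i j) : ∀ i j, a ∣ (r • B) i j := by
  intro i j
  rw [Matrix.smul_apply, smul_eq_mul]
  exact (hB i j).mul_left _

/-- One Newton step for congruence. -/
theorem congr_step (M G N U A : Matrix (Fin m) (Fin m) R) (C cc : R)
    (hMN : M * N = C • 1) (hNM : N * M = C • 1) (hNs : Nᵀ = N)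
    (hcc : cc * 2 = -1) (hGs : Gᵀ = G) (hMs : Mᵀ = M)
    (hU : U * A * Uᵀ = M + C • G) :
    ((1 + cc • (G * N)) * U) * A * ((1 + cc • (G * N)) * U)ᵀ =
      M + C • ((cc • (G * N)) * G + G * (cc • (G * N))ᵀ + cc • (G * (cc • (G * N))ᵀ)
        + (cc • (G * N)) * G * (cc • (G * N))ᵀ) := by
  set X := cc • (G * N) with hX
  have hXt : Xᵀ = cc • (N * G) := by
    rw [hX, Matrix.transpose_smul, Matrix.transpose_mul, hNs, hGs]
  have hXM : X * M = (cc * C) • G := by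
    rw [hX, Matrix.smul_mul, mul_assoc, hNM, Matrix.mul_smul, mul_one, smul_smul]
  have hMXt : M * Xᵀ = (cc * C) • G := by
    rw [hXt, Matrix.mul_smul, ← mul_assoc, hMN, Matrix.smul_mul, one_mul, smul_smul]
  have key : (1 + X) * (M + C • G) * (1 + Xᵀ)
      = M + C • (X * G + G * Xᵀ + cc • (G * Xᵀ) + X * G * Xᵀ) := by
    have expand : (1 + X) * (M + C • G) * (1 + Xᵀ)
        = M + C • G + X * M + X * (C • G) + M * Xᵀ + (C • G) * Xᵀ
          + X * M * Xᵀ + X * (C • G) * Xᵀ := by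
      simp only [add_mul, mul_add, one_mul, mul_one]
      abel
    have hXCG : X * (C • G) = C • (X * G) := by rw [Matrix.mul_smul]
    have hCGXt : (C • G) * Xᵀ = C • (G * Xᵀ) := by rw [Matrix.smul_mul]
    have hXMXt : X * M * Xᵀ = C • (cc • (G * Xᵀ)) := by
      rw [hXM, Matrix.smul_mul, smul_smul, mul_comm cc C, ← smul_smul]
    rw [expand, hXMXt, hXM, hMXt, hXCG, hCGXt]
    simp only [Matrix.smul_mul, Matrix.mul_smul, smul_smul]
    match_scalars <;> first | ring1 | linear_combination C * hcc
  calc ((1 + X) * U) * A * ((1 + X) * U)ᵀ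
      = (1 + X) * (U * A * Uᵀ) * (1 + X)ᵀ := by
        rw [Matrix.transpose_mul]; simp only [mul_assoc]
    _ = (1 + X) * (M + C • G) * (1 + Xᵀ) := by
        rw [hU, Matrix.transpose_add, Matrix.transpose_one]
    _ = _ := by rw [key]

end Helpers

theorem norm_le_of_pow_dvd {p : ℕ} [Fact p.Prime] {x : ℤ_[p]} {k : ℕ}
    (h : (p : ℤ_[p]) ^ k ∣ x) : ‖x‖ ≤ (p : ℝ) ^ (-(k : ℤ)) :=
  (PadicInt.norm_le_pow_iff_mem_span_pow x k).2 (Ideal.mem_span_singleton.2 h)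

theorem stmt_1' {p : ℕ} [Fact p.Prime] (hp : Odd p) {n : ℕ} (hn : 1 ≤ n)
    (M : Matrix (Fin n) (Fin n) ℤ_[p]) (hMs : M.IsSymm) (hMd : M.det ≠ 0)
    (d : ℕ) (hd : AddMonoid.exponent M.Cok = p ^ d)
    (ΔM : Matrix (Fin n) (Fin n) ℤ_[p]) (hΔs : ΔM.IsSymm)
    (hΔ : ∀ i j, (p : ℤ_[p]) ^ (d + 1) ∣ ΔM i j) :
    ∃ U : (Matrix (Fin n) (Fin n) ℤ_[p])ˣ,
      (U : Matrix (Fin n) (Fin n) ℤ_[p]) * M * (U : Matrix (Fin n) (Fin n) ℤ_[p])ᵀ = M + ΔM := by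
  classical
  have hq : p.Prime := Fact.out
  have hpz : (p : ℤ_[p]) ≠ 0 := by
    exact_mod_cast Nat.cast_ne_zero.2 hq.pos.ne'
  set C : ℤ_[p] := (p : ℤ_[p]) ^ d with hC
  have hCz : C ≠ 0 := pow_ne_zero _ hpz
  -- construct N with M * N = C • 1
  have hsingle : ∀ j, ∃ w : Fin n → ℤ_[p], M.mulVec w = C • (Pi.single j 1 : Fin n → ℤ_[p]) := by
    intro j
    have h1 : (p ^ d : ℕ) • (Submodule.Quotient.mk (Pi.single j 1 : Fin n → ℤ_[p]) : M.Cok) = 0 := by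
      rw [← hd]; exact AddMonoid.exponent_nsmul_eq_zero _
    rw [← Nat.cast_smul_eq_nsmul ℤ_[p], ← Submodule.Quotient.mk_smul,
      Submodule.Quotient.mk_eq_zero] at h1
    obtain ⟨w, hw⟩ := h1
    refine ⟨w, ?_⟩
    rw [Matrix.mulVecLin_apply] at hw
    rw [hw, hC]
    push_cast
    rfl
  choose w hw using hsingle
  set N : Matrix (Fin n) (Fin n) ℤ_[p] := Matrix.of (fun i j => w j i) with hN
  have hMN : M * N = C • 1 := by
    ext i j
    have h := congrFun (hw j) i
    rw [Matrix.mulVec, dotProduct] at h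
    rw [Matrix.mul_apply]
    simp only [hN, Matrix.of_apply]
    rw [h]
    simp only [Pi.smul_apply, Matrix.smul_apply, Matrix.one_apply, Pi.single_apply,
      smul_eq_mul]
  have hNM : N * M = C • 1 := by
    apply matrix_mul_left_cancel hMd
    rw [← mul_assoc, hMN, Matrix.smul_mul, one_mul, Matrix.mul_smul, mul_one]
  have hNs : Nᵀ = N := by
    apply matrix_mul_right_cancel hMd
    rw [hNM]
    have := congrArg Matrix.transpose hMN
    rw [Matrix.transpose_mul, hMs, Matrix.transpose_smul, Matrix.transpose_one] at this
    exact this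
  -- 2 is a unit, cc = -(1/2)
  have h2u : IsUnit (2 : ℤ_[p]) := by
    rw [PadicInt.isUnit_iff]
    rcases lt_or_eq_of_le (PadicInt.norm_le_one (2 : ℤ_[p])) with h | h
    · exfalso
      have h2 : ((2 : ℤ) : ℤ_[p]) = (2 : ℤ_[p]) := by norm_cast
      rw [← h2, PadicInt.norm_int_lt_one_iff_dvd] at h
      have hle := Int.le_of_dvd (by norm_num) h
      have hple : p ≤ 2 := by exact_mod_cast hle
      have hpe : p = 2 := le_antisymm hple hq.two_le
      rw [hpe] at hp
      exact absurd hp (by decide)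
    · exact h
  set cc : ℤ_[p] := -(Ring.inverse (2 : ℤ_[p])) with hccdef
  have hcc : cc * 2 = -1 := by
    rw [hccdef, neg_mul, Ring.inverse_mul_cancel _ h2u]
  -- initial G
  obtain ⟨G0, hG0eq, hG0dvd⟩ :
      ∃ G0 : Matrix (Fin n) (Fin n) ℤ_[p],
        ΔM = C • G0 ∧ ∀ i j, (p : ℤ_[p]) ^ (0 + 1) ∣ G0 i j := by
    choose g hg using fun i j => hΔ i j
    refine ⟨Matrix.of fun i j => p * g i j, ?_, ?_⟩
    · ext i j
      simp only [Matrix.smul_apply, Matrix.of_apply, smul_eq_mul, hC]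
      rw [hg i j, pow_succ]
      ring
    · intro i j
      exact ⟨g i j, by rw [pow_one]; rfl⟩
  set A := M + ΔM with hA
  -- the iteration
  set step : Matrix (Fin n) (Fin n) ℤ_[p] × Matrix (Fin n) (Fin n) ℤ_[p] →
      Matrix (Fin n) (Fin n) ℤ_[p] × Matrix (Fin n) (Fin n) ℤ_[p] := fun s =>
    ((1 + cc • (s.2 * N)) * s.1,
     (cc • (s.2 * N)) * s.2 + s.2 * (cc • (s.2 * N))ᵀ + cc • (s.2 * (cc • (s.2 * N))ᵀ)
       + (cc • (s.2 * N)) * s.2 * (cc • (s.2 * N))ᵀ) with hstep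
  set f : ℕ → Matrix (Fin n) (Fin n) ℤ_[p] × Matrix (Fin n) (Fin n) ℤ_[p] :=
    fun k => Nat.rec (1, G0) (fun _ s => step s) k with hf
  have hfs : ∀ k, f (k + 1) = step (f k) := fun k => rfl
  -- invariants
  have hinv : ∀ k, ((f k).2)ᵀ = (f k).2 ∧ (∀ i j, (p : ℤ_[p]) ^ (k + 1) ∣ (f k).2 i j) ∧
      (f k).1 * A * ((f k).1)ᵀ = M + C • (f k).2 ∧
      (∀ i j, (p : ℤ_[p]) ∣ ((f k).1 - 1) i j) := by
    intro k
    induction k with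
    | zero =>
      refine ⟨?_, hG0dvd, ?_, ?_⟩
      · -- symmetry of G0
        show G0ᵀ = G0
        have hsm : C • G0ᵀ = C • G0 := by
          calc C • G0ᵀ = (C • G0)ᵀ := (Matrix.transpose_smul C G0).symm
          _ = ΔMᵀ := by rw [hG0eq]
          _ = ΔM := hΔs
          _ = C • G0 := hG0eq
        ext i j
        have h3 := congrFun (congrFun hsm i) j
        simp only [Matrix.smul_apply, smul_eq_mul] at h3
        exact mul_left_cancel₀ hCz h3
      · show 1 * A * (1 : Matrix (Fin n) (Fin n) ℤ_[p])ᵀ = M + C • G0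
        rw [Matrix.transpose_one, one_mul, mul_one, hA, hG0eq]
      · intro i j
        show (p : ℤ_[p]) ∣ ((1 : Matrix (Fin n) (Fin n) ℤ_[p]) - 1) i j
        simp
    | succ k ih =>
      obtain ⟨hGs, hGdvd, hUid, hUmod⟩ := ih
      set U := (f k).1
      set G := (f k).2
      have hXdvd : ∀ i j, (p : ℤ_[p]) ^ (k + 1) ∣ (cc • (G * N)) i j :=
        dvd_entries_smul (dvd_entries_mul_left hGdvd)
      have hXtdvd : ∀ i j, (p : ℤ_[p]) ^ (k + 1) ∣ (cc • (G * N))ᵀ i j := fun i j => hXdvd j i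
      have hpow : ((p : ℤ_[p]) ^ (k + 1 + 1)) ∣ (p : ℤ_[p]) ^ (k + 1) * (p : ℤ_[p]) ^ (k + 1) := by
        rw [← pow_add]
        exact pow_dvd_pow _ (by omega)
      refine ⟨?_, ?_, ?_, ?_⟩
      · -- symmetry
        rw [hfs k]
        show ((cc • (G * N)) * G + G * (cc • (G * N))ᵀ + cc • (G * (cc • (G * N))ᵀ)
          + (cc • (G * N)) * G * (cc • (G * N))ᵀ)ᵀ = _
        show _ = (cc • (G * N)) * G + G * (cc • (G * N))ᵀ + cc • (G * (cc • (G * N))ᵀ)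
          + (cc • (G * N)) * G * (cc • (G * N))ᵀ
        simp only [Matrix.transpose_add, Matrix.transpose_smul, Matrix.transpose_mul,
          Matrix.transpose_transpose, hGs, hNs]
        simp only [Matrix.smul_mul, Matrix.mul_smul, smul_smul, mul_assoc]
      · -- divisibility
        rw [hfs k]
        intro i j
        show ((p : ℤ_[p]) ^ (k + 1 + 1)) ∣ ((cc • (G * N)) * G + G * (cc • (G * N))ᵀ
          + cc • (G * (cc • (G * N))ᵀ) + (cc • (G * N)) * G * (cc • (G * N))ᵀ) i j
        have t1 := dvd_entries_mul hXdvd hGdvd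
        have t2 := dvd_entries_mul hGdvd hXtdvd
        have t3 := dvd_entries_smul (r := cc) t2
        have t4 := dvd_entries_mul_left (C := (cc • (G * N))ᵀ) (fun i j => hpow.trans (t1 i j))
        simp only [Matrix.add_apply]
        exact dvd_add (dvd_add (dvd_add (hpow.trans (t1 i j)) (hpow.trans (t2 i j)))
          (hpow.trans (t3 i j))) (t4 i j)
      · -- congruence identity
        rw [hfs k]
        exact congr_step M G N U A C cc hMN hNM hNs hcc hGs hMs hUid
      · -- U ≡ 1 mod p
        rw [hfs k]
        intro i j
        show (p : ℤ_[p]) ∣ ((1 + cc • (G * N)) * U - 1) i j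
        have heq : (1 + cc • (G * N)) * U - 1 = (U - 1) + (cc • (G * N)) * U := by
          rw [add_mul, one_mul]; abel
        rw [heq, Matrix.add_apply]
        refine dvd_add (hUmod i j) ?_
        have hx : ∀ i j, (p : ℤ_[p]) ∣ (cc • (G * N)) i j := fun i j =>
          (dvd_pow_self (p : ℤ_[p]) (Nat.succ_ne_zero k)).trans (hXdvd i j)
        exact dvd_entries_mul_left hx i j
  
  -- Cauchy sequence of U's
  have hdiffdvd : ∀ k, ∀ i j, (p : ℤ_[p]) ^ (k + 1) ∣ ((f (k+1)).1 - (f k).1) i j := by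
    intro k i j
    have hXdvd : ∀ i j, (p : ℤ_[p]) ^ (k + 1) ∣ (cc • ((f k).2 * N)) i j :=
      dvd_entries_smul (dvd_entries_mul_left (hinv k).2.1)
    have hrw : (f (k+1)).1 - (f k).1 = (cc • ((f k).2 * N)) * (f k).1 := by
      rw [hfs k]
      show (1 + cc • ((f k).2 * N)) * (f k).1 - (f k).1 = _
      rw [add_mul, one_mul]
      abel
    rw [hrw]
    exact dvd_entries_mul_left hXdvd i j
  have hp1R : (1:ℝ) < (p:ℝ) := by exact_mod_cast hq.one_lt
  have hrpos : (0:ℝ) < (p:ℝ)⁻¹ := by positivity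
  have hrlt : (p:ℝ)⁻¹ < 1 := by
    first
    | exact inv_lt_one_of_one_lt₀ hp1R
    | exact inv_lt_one hp1R
  have hpinv : ∀ k : ℕ, (p:ℝ) ^ (-(k:ℤ)) = ((p:ℝ)⁻¹)^k := by
    intro k
    rw [_root_.zpow_neg, zpow_natCast, inv_pow]
  have hnormdiff : ∀ k i j, ‖((f (k+1)).1 - (f k).1) i j‖ ≤ (p:ℝ)⁻¹ * ((p:ℝ)⁻¹)^k := by
    intro k i j
    have h1 := norm_le_of_pow_dvd (hdiffdvd k i j)
    calc ‖((f (k+1)).1 - (f k).1) i j‖ ≤ (p:ℝ) ^ (-((k+1:ℕ):ℤ)) := h1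
    _ = (p:ℝ)⁻¹ * ((p:ℝ)⁻¹)^k := by rw [hpinv (k+1), pow_succ']
  have hcauchy : ∀ i j, ∃ Lij : ℤ_[p], Filter.Tendsto (fun k => (f k).1 i j)
      Filter.atTop (nhds Lij) := by
    intro i j
    apply cauchySeq_tendsto_of_complete
    apply cauchySeq_of_le_geometric ((p:ℝ)⁻¹) ((p:ℝ)⁻¹) hrlt
    intro k
    rw [dist_eq_norm]
    have hneg : (f k).1 i j - (f (k+1)).1 i j = -(((f (k+1)).1 - (f k).1) i j) := by
      simp [Matrix.sub_apply]
    rw [hneg, norm_neg]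
    exact hnormdiff k i j
  choose L hL using hcauchy
  set Uf : Matrix (Fin n) (Fin n) ℤ_[p] := Matrix.of L with hUf
  have hmulT : ∀ i j, Filter.Tendsto (fun k => ((f k).1 * A * ((f k).1)ᵀ) i j)
      Filter.atTop (nhds ((Uf * A * Ufᵀ) i j)) := by
    intro i j
    simp only [Matrix.mul_apply, Matrix.transpose_apply, hUf, Matrix.of_apply]
    apply tendsto_finset_sum
    intro b _
    exact Filter.Tendsto.mul
      (tendsto_finset_sum _ (fun a _ => ((hL i a).mul tendsto_const_nhds))) (hL j b)
  have hlim0 : Filter.Tendsto (fun k : ℕ => ((p:ℝ)⁻¹)^(k+1)) Filter.atTop (nhds 0) := by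
    have h0 := tendsto_pow_atTop_nhds_zero_of_lt_one (le_of_lt hrpos) hrlt
    have h1 := h0.const_mul ((p:ℝ)⁻¹)
    simp only [mul_zero] at h1
    simpa [pow_succ'] using h1
  have hlimM : ∀ i j, Filter.Tendsto (fun k => ((f k).1 * A * ((f k).1)ᵀ) i j)
      Filter.atTop (nhds (M i j)) := by
    intro i j
    have heq : ∀ k, ((f k).1 * A * ((f k).1)ᵀ) i j = M i j + (C • (f k).2) i j := by
      intro k
      rw [(hinv k).2.2.1, Matrix.add_apply]
    simp only [heq]
    have h0 : Filter.Tendsto (fun k => (C • (f k).2) i j) Filter.atTop (nhds 0) := by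
      apply squeeze_zero_norm _ hlim0
      intro k
      have hd1 : (p : ℤ_[p])^(k+1) ∣ (C • (f k).2) i j := dvd_entries_smul (hinv k).2.1 i j
      have h2 := norm_le_of_pow_dvd hd1
      calc ‖(C • (f k).2) i j‖ ≤ (p:ℝ) ^ (-((k+1:ℕ):ℤ)) := h2
      _ = ((p:ℝ)⁻¹)^(k+1) := hpinv (k+1)
    simpa using tendsto_const_nhds.add h0
  have hUfA : Uf * A * Ufᵀ = M := by
    ext i j
    exact tendsto_nhds_unique (hmulT i j) (hlimM i j)
  -- Uf is congruent to 1 mod p, hence invertible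
  have hUf1 : ∀ i j, (p:ℤ_[p]) ∣ (Uf - 1) i j := by
    intro i j
    rw [← PadicInt.norm_lt_one_iff_dvd]
    have hT : Filter.Tendsto (fun k => ‖((f k).1 - 1) i j‖) Filter.atTop
        (nhds ‖(Uf - 1) i j‖) := by
      simp only [Matrix.sub_apply, hUf, Matrix.of_apply]
      exact ((hL i j).sub tendsto_const_nhds).norm
    have hb : ∀ k, ‖((f k).1 - 1) i j‖ ≤ (p:ℝ)⁻¹ := by
      intro k
      have h3 := norm_le_of_pow_dvd (k := 1) (by simpa [pow_one] using (hinv k).2.2.2 i j)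
      simpa using h3
    have hle := le_of_tendsto hT (Filter.Eventually.of_forall hb)
    exact lt_of_le_of_lt hle hrlt
  haveI : Fact (1 < p) := ⟨hq.one_lt⟩
  have hker : ∀ x : ℤ_[p], (p:ℤ_[p]) ∣ x → PadicInt.toZMod x = 0 := by
    intro x hx
    have hmem : x ∈ RingHom.ker (PadicInt.toZMod (p := p)) := by
      rw [PadicInt.ker_toZMod, PadicInt.maximalIdeal_eq_span_p]
      exact Ideal.mem_span_singleton.2 hx
    exact RingHom.mem_ker.1 hmem
  have hmap1 : Uf.map PadicInt.toZMod = 1 := by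
    ext i j
    obtain ⟨c0, hc0⟩ := hUf1 i j
    have heq : Uf i j = (1 : Matrix (Fin n) (Fin n) ℤ_[p]) i j + (p:ℤ_[p]) * c0 := by
      rw [← hc0]
      simp [Matrix.sub_apply]
    rw [Matrix.map_apply, heq, map_add, RingHom.map_mul, hker _ dvd_rfl, zero_mul, add_zero]
    by_cases hij : i = j <;> simp [Matrix.one_apply, hij]
  have hdet1 : PadicInt.toZMod Uf.det = 1 := by
    rw [RingHom.map_det, RingHom.mapMatrix_apply, hmap1, Matrix.det_one]
  have hdetu : IsUnit Uf.det := by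
    by_contra hcon
    have hmem : Uf.det ∈ IsLocalRing.maximalIdeal ℤ_[p] :=
      (IsLocalRing.mem_maximalIdeal _).2 (mem_nonunits_iff.2 hcon)
    rw [← PadicInt.ker_toZMod, RingHom.mem_ker] at hmem
    rw [hmem] at hdet1
    exact zero_ne_one hdet1
  obtain ⟨V, hV⟩ := (Matrix.isUnit_iff_isUnit_det Uf).2 hdetu
  refine ⟨V⁻¹, ?_⟩
  have hinvmul : ((V⁻¹ : (Matrix (Fin n) (Fin n) ℤ_[p])ˣ) : Matrix (Fin n) (Fin n) ℤ_[p]) *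
      (V : Matrix (Fin n) (Fin n) ℤ_[p]) = 1 := V.inv_mul
  have hVt : ((V : Matrix (Fin n) (Fin n) ℤ_[p]))ᵀ *
      ((V⁻¹ : (Matrix (Fin n) (Fin n) ℤ_[p])ˣ) : Matrix (Fin n) (Fin n) ℤ_[p])ᵀ = 1 := by
    rw [← Matrix.transpose_mul, hinvmul, Matrix.transpose_one]
  calc ((V⁻¹ : (Matrix (Fin n) (Fin n) ℤ_[p])ˣ) : Matrix (Fin n) (Fin n) ℤ_[p]) * M *
        ((V⁻¹ : (Matrix (Fin n) (Fin n) ℤ_[p])ˣ) : Matrix (Fin n) (Fin n) ℤ_[p])ᵀ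
      = (V⁻¹ : (Matrix (Fin n) (Fin n) ℤ_[p])ˣ) *
        ((V : Matrix (Fin n) (Fin n) ℤ_[p]) * A * (V : Matrix (Fin n) (Fin n) ℤ_[p])ᵀ) *
        ((V⁻¹ : (Matrix (Fin n) (Fin n) ℤ_[p])ˣ) : Matrix (Fin n) (Fin n) ℤ_[p])ᵀ := by
        rw [hV, hUfA]
    _ = (((V⁻¹ : (Matrix (Fin n) (Fin n) ℤ_[p])ˣ) : Matrix (Fin n) (Fin n) ℤ_[p]) *
        (V : Matrix (Fin n) (Fin n) ℤ_[p])) * A *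
        ((V : Matrix (Fin n) (Fin n) ℤ_[p])ᵀ *
        ((V⁻¹ : (Matrix (Fin n) (Fin n) ℤ_[p])ˣ) : Matrix (Fin n) (Fin n) ℤ_[p])ᵀ) := by
        simp only [mul_assoc]
    _ = A := by rw [hinvmul, hVt, one_mul, mul_one]

/-- For `p` odd, a nonsingular symmetric `M ∈ Sym_n(ℤ_p)` with
`Dep_p(Cok(M)) = d` (i.e. the exponent of `Cok(M)` is `p^d`), and any symmetric `ΔM` all of
whose entries lie in `p^(d+1) ℤ_p`, the matrices `M` and `M + ΔM` are congruent. -/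
theorem stmt_1 {p : ℕ} [Fact p.Prime] (hp : Odd p) {n : ℕ} (hn : 1 ≤ n)
    (M : Matrix (Fin n) (Fin n) ℤ_[p]) (hMs : M.IsSymm) (hMd : M.det ≠ 0)
    (d : ℕ) (hd : AddMonoid.exponent M.Cok = p ^ d)
    (ΔM : Matrix (Fin n) (Fin n) ℤ_[p]) (hΔs : ΔM.IsSymm)
    (hΔ : ∀ i j, (p : ℤ_[p]) ^ (d + 1) ∣ ΔM i j) :
    M.Congruent (M + ΔM) := by
  exact stmt_1' hp hn M hMs hMd d hd ΔM hΔs hΔ
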